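/- Let ε ∈ (0, 1] and let (f(t))_{t≥0} be a family of positive Borel measures on I, each of total mass ρ, satisfying the ε-scaled weak Boltzmann equation: for every bounded measurable 2π-periodic ψ, d/dt ∫_I ψ(θ) f(t)(dθ) = (1/ε)∫_I∫_I (ψ(θ⁎ + ε𝒫(θ⁎, φ⁎)) − ψ(θ⁎)) f(t)(dθ⁎) f(t)(dφ⁎). Then for every twice continuously differentiable 2π-periodic ψ and every t ≥ 0, |d/dt ∫_I ψ(θ) f(t)(dθ) − ∫_I ψ'(θ⁎) H[f(t)](θ⁎) f(t)(dθ⁎)| ≤ (ε/2)·‖ψ''‖_∞·π²·ρ², where H[f](θ⁎) := ∫_I 𝒫(θ⁎, φ⁎) f(dφ⁎) = ρ(α_d − θ⁎) + a(α_c − α_d + θ⁎)∫_I 𝒢(|θ⁎ − φ⁎|) f(dφ⁎). -/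

import Mathlib

open MeasureTheory Real Filter
open scoped Real

/-- The angular collision-probability profile `𝒢(s) = (1/π)·min{s, 2π−s}`. -/
noncomputable def Gfun (s : ℝ) : ℝ := (1 / π) * min s (2 * π - s)

/-- The collision probability `P(θ⁎, φ⁎) = a·𝒢(|θ⁎ − φ⁎|)`. -/
noncomputable def Pcoll (a θ φ : ℝ) : ℝ := a * Gfun |θ - φ|

/-- `𝒫(θ⁎, φ⁎) = α_d − θ⁎ + P(θ⁎, φ⁎)(α_c − α_d + θ⁎)`. -/
noncomputable def Pscr (αd αc a θ φ : ℝ) : ℝ :=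
  αd - θ + Pcoll a θ φ * (αc - αd + θ)

/-- The mean-field transport speed
`H[f](θ⁎) = ρ(α_d − θ⁎) + a(α_c − α_d + θ⁎)∫_I 𝒢(|θ⁎ − φ⁎|) f(dφ⁎)`. -/
noncomputable def Hfield (αd αc a ρ : ℝ) (f : Measure ℝ) (θ : ℝ) : ℝ :=
  ρ * (αd - θ) + a * (αc - αd + θ) * ∫ φ, Gfun |θ - φ| ∂f

set_option maxHeartbeats 1000000 in
lemma periodic_deriv'' {g : ℝ → ℝ} (hp : ∀ x, g (x + 2*π) = g x) (x : ℝ) :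
    deriv g (x + 2*π) = deriv g x := by
  have h : (fun y => g (y + 2*π)) = g := funext hp
  rw [← deriv_comp_add_const, h]

lemma bdd_of_periodic {g : ℝ → ℝ} (hc : Continuous g) (hp : ∀ x, g (x + 2*π) = g x) :
    ∃ B, ∀ x, |g x| ≤ B := by
  obtain ⟨B, hB⟩ := (isCompact_Icc (a := (0:ℝ)) (b := 2*π)).exists_bound_of_continuousOn
    hc.continuousOn
  refine ⟨B, fun x => ?_⟩
  obtain ⟨y, hy, hxy⟩ := (Function.Periodic.exists_mem_Ico₀ (f := g) hp two_pi_pos x)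
  rw [hxy, ← Real.norm_eq_abs]
  exact hB y (Set.mem_Icc_of_Ico hy)

lemma contdiff_one_deriv {ψ : ℝ → ℝ} (hψ : ContDiff ℝ 2 ψ) : ContDiff ℝ 1 (deriv ψ) := by
  have := (contDiff_succ_iff_deriv (n := 1)).mp (by rw [one_add_one_eq_two]; exact hψ)
  exact this.2.2

lemma taylor2a {ψ : ℝ → ℝ} (hψ : ContDiff ℝ 2 ψ) {M : ℝ}
    (hM : ∀ x, |deriv (deriv ψ) x| ≤ M) (θ h : ℝ) :
    |ψ (θ + h) - ψ θ - h * deriv ψ θ| ≤ M * h ^ 2 / 2 := by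
  have hM0 : 0 ≤ M := le_trans (abs_nonneg _) (hM 0)
  have hd : Differentiable ℝ ψ := hψ.differentiable two_ne_zero
  have hψ2 : ContDiff ℝ 1 (deriv ψ) := contdiff_one_deriv hψ
  have hd2 : Differentiable ℝ (deriv ψ) := hψ2.differentiable one_ne_zero
  have hc1 : Continuous (deriv ψ) := hd2.continuous
  have hc2 : Continuous (deriv (deriv ψ)) := hψ2.continuous_deriv le_rfl
  have hlip : ∀ s : ℝ, |deriv ψ s - deriv ψ θ| ≤ M * |s - θ| := by
    intro s
    have h1 : ∫ u in θ..s, deriv (deriv ψ) u = deriv ψ s - deriv ψ θ :=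
      intervalIntegral.integral_deriv_eq_sub (fun x _ => hd2 x)
        (hc2.intervalIntegrable θ s)
    rw [← h1, ← Real.norm_eq_abs]
    have := intervalIntegral.norm_integral_le_of_norm_le_const
      (f := fun u => deriv (deriv ψ) u) (C := M) (a := θ) (b := s)
      (fun u _ => by rw [Real.norm_eq_abs]; exact hM u)
    simpa [abs_sub_comm] using this
  have key : ψ (θ + h) - ψ θ - h * deriv ψ θ
      = ∫ s in θ..θ+h, (deriv ψ s - deriv ψ θ) := by
    have h1 : ∫ s in θ..θ+h, deriv ψ s = ψ (θ+h) - ψ θ :=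
      intervalIntegral.integral_deriv_eq_sub (fun x _ => hd x)
        (hc1.intervalIntegrable _ _)
    have h2 : ∫ s in θ..θ+h, deriv ψ θ ∂volume = h * deriv ψ θ := by
      rw [intervalIntegral.integral_const]
      rw [smul_eq_mul]; ring_nf
    rw [intervalIntegral.integral_sub (hc1.intervalIntegrable _ _)
      (intervalIntegrable_const), h1, h2]
  rw [key]
  have hb : abs (∫ s in θ..θ+h, (deriv ψ s - deriv ψ θ))
      ≤ abs (∫ s in θ..θ+h, M * |s - θ|) := by
    rw [← Real.norm_eq_abs (∫ s in θ..θ+h, (deriv ψ s - deriv ψ θ))]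
    apply intervalIntegral.norm_integral_le_abs_of_norm_le
    · exact MeasureTheory.ae_of_all _ (fun s => by rw [Real.norm_eq_abs]; exact hlip s)
    · exact (continuous_const.mul ((continuous_id.sub continuous_const).abs)).intervalIntegrable _ _
  refine hb.trans (le_of_eq ?_)
  have h3 : ∫ s in θ..θ+h, M * |s - θ| = M * ∫ s in θ..θ+h, |s - θ| := by
    rw [intervalIntegral.integral_const_mul]
  have hsub : ∫ s in θ..θ+h, (s - θ) = h^2/2 := by
    have h5 : ∫ s in θ..θ+h, (s - θ) = (∫ s in θ..θ+h, s) - ∫ s in θ..θ+h, (θ:ℝ) :=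
      intervalIntegral.integral_sub (continuous_id.intervalIntegrable _ _) intervalIntegrable_const
    rw [h5, integral_id, intervalIntegral.integral_const, smul_eq_mul]
    ring
  have habs : abs (∫ s in θ..θ+h, |s - θ|) = h ^ 2 / 2 := by
    rcases le_or_gt 0 h with hh | hh
    · rw [intervalIntegral.integral_congr (g := fun s => s - θ) ?_, hsub,
          abs_of_nonneg (by positivity)]
      intro u hu; rw [Set.uIcc_of_le (by linarith)] at hu
      exact abs_of_nonneg (by linarith [hu.1])
    · rw [intervalIntegral.integral_congr (g := fun s => -(s - θ)) ?_,
          intervalIntegral.integral_neg, hsub, abs_neg, abs_of_nonneg (by positivity)]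
      intro u hu; rw [Set.uIcc_of_ge (by linarith)] at hu
      exact abs_of_nonpos (by linarith [hu.2])
  rw [h3, abs_mul, abs_of_nonneg hM0, habs]
  ring

lemma Gfun_le_one (s : ℝ) : Gfun s ≤ 1 := by
  have hπ : (0:ℝ) < π := pi_pos
  have : min s (2*π - s) ≤ π := by
    rcases le_total s π with h | h
    · exact le_trans (min_le_left _ _) h
    · exact le_trans (min_le_right _ _) (by linarith)
  rw [Gfun, div_mul_eq_mul_div, one_mul, div_le_one hπ]
  linarith

lemma Gfun_nonneg {s : ℝ} (h0 : 0 ≤ s) (h2 : s ≤ 2*π) : 0 ≤ Gfun s := by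
  have hπ : (0:ℝ) < π := pi_pos
  have : 0 ≤ min s (2*π - s) := le_min h0 (by linarith)
  exact mul_nonneg (by positivity) this

lemma abs_sub_Ico_le {αd θ φ : ℝ} (hθ : θ ∈ Set.Ico (-π + αd) (π + αd))
    (hφ : φ ∈ Set.Ico (-π + αd) (π + αd)) : |θ - φ| ≤ 2*π := by
  obtain ⟨h1, h2⟩ := hθ; obtain ⟨h3, h4⟩ := hφ
  exact abs_le.mpr ⟨by linarith, by linarith⟩

lemma Gfun_abs_le {αd θ φ : ℝ} (hθ : θ ∈ Set.Ico (-π + αd) (π + αd))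
    (hφ : φ ∈ Set.Ico (-π + αd) (π + αd)) : abs (Gfun |θ - φ|) ≤ 1 :=
  abs_le.mpr ⟨by linarith [Gfun_nonneg (abs_nonneg (θ - φ)) (abs_sub_Ico_le hθ hφ)],
    Gfun_le_one _⟩

lemma Pcoll_mem {a θ φ : ℝ} (ha : 0 ≤ a) (ha1 : a ≤ 1) (h2 : |θ - φ| ≤ 2*π) :
    Pcoll a θ φ ∈ Set.Icc (0:ℝ) 1 := by
  have h1 := Gfun_le_one |θ - φ|
  have h0 := Gfun_nonneg (abs_nonneg (θ - φ)) h2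
  constructor
  · exact mul_nonneg ha h0
  · calc a * Gfun |θ - φ| ≤ 1 * 1 := by exact mul_le_mul ha1 h1 h0 zero_le_one
      _ = 1 := one_mul 1

lemma pscr_abs_le {αd αc a θ φ : ℝ} (hαc : |αc| ≤ π) (ha : 0 ≤ a) (ha1 : a ≤ 1)
    (hθ : θ ∈ Set.Ico (-π + αd) (π + αd)) (hφ : φ ∈ Set.Ico (-π + αd) (π + αd)) :
    |Pscr αd αc a θ φ| ≤ π := by
  have hπ : (0:ℝ) < π := pi_pos
  obtain ⟨hθ1, hθ2⟩ := hθ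
  obtain ⟨hφ1, hφ2⟩ := hφ
  have h2 : |θ - φ| ≤ 2*π := abs_le.mpr ⟨by linarith, by linarith⟩
  obtain ⟨hP0, hP1⟩ := Pcoll_mem ha ha1 h2
  obtain ⟨hc1, hc2⟩ := abs_le.mp hαc
  rw [Pscr, abs_le]
  constructor <;> nlinarith [mul_nonneg hP0 (sub_nonneg.mpr hc2)]

/-- Quasi-invariant direction limit: along the `ε`-scaled weak Boltzmann equation, for every
`C²` and `2π`-periodic test function `ψ`, the time derivative of `∫ ψ df(t)` differs from the
mean-field term `∫ ψ'(θ⁎) H[f(t)](θ⁎) f(t)(dθ⁎)` by at most `(ε/2)‖ψ''‖_∞ π² ρ²`. -/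
theorem stmt_11 (αd αc : ℝ) (hαd : αd ∈ Set.Ico (-π) π) (hαc : αc ∈ Set.Ico (-π) π)
    (ρ a : ℝ) (hρ : 0 < ρ) (hρ1 : ρ ≤ 1) (ha : a ∈ Set.Icc (0 : ℝ) 1)
    (ε : ℝ) (hε : 0 < ε) (hε1 : ε ≤ 1)
    (f : ℝ → Measure ℝ)
    (hsupp : ∀ t, 0 ≤ t → f t (Set.Ico (-π + αd) (π + αd))ᶜ = 0)
    (hmass : ∀ t, 0 ≤ t → f t Set.univ = ENNReal.ofReal ρ)
    -- the ε-scaled weak Boltzmann equation: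
    (hweak : ∀ ψ : ℝ → ℝ, Measurable ψ → (∃ M, ∀ x, |ψ x| ≤ M) →
      (∀ x, ψ (x + 2 * π) = ψ x) → ∀ t, 0 ≤ t →
      HasDerivAt (fun s => ∫ θ, ψ θ ∂(f s))
        ((1 / ε) * ∫ θ, ∫ φ, (ψ (θ + ε * Pscr αd αc a θ φ) - ψ θ) ∂(f t) ∂(f t)) t) :
    ∀ ψ : ℝ → ℝ, ContDiff ℝ 2 ψ → (∀ x, ψ (x + 2 * π) = ψ x) →
      ∀ t, 0 ≤ t → ∀ D : ℝ,
        HasDerivAt (fun s => ∫ θ, ψ θ ∂(f s)) D t →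
        |D - ∫ θ, deriv ψ θ * Hfield αd αc a ρ (f t) θ ∂(f t)| ≤
          (ε / 2) * (⨆ x : ℝ, |deriv (deriv ψ) x|) * π ^ 2 * ρ ^ 2 := by
  intro ψ hψ hper t ht D hD
  have hπ : (0:ℝ) < π := pi_pos
  set I : Set ℝ := Set.Ico (-π + αd) (π + αd) with hI
  haveI hfin : IsFiniteMeasure (f t) := ⟨by rw [hmass t ht]; exact ENNReal.ofReal_lt_top⟩
  have hmassr : ((f t) Set.univ).toReal = ρ := by
    rw [hmass t ht]; exact ENNReal.toReal_ofReal hρ.le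
  have haeI : ∀ᵐ θ ∂(f t), θ ∈ I := by
    rw [MeasureTheory.ae_iff]
    exact hsupp t ht
  -- smoothness facts
  have hψc : Continuous ψ := hψ.continuous
  have hψ2 : ContDiff ℝ 1 (deriv ψ) := contdiff_one_deriv hψ
  have hψ'c : Continuous (deriv ψ) := hψ2.continuous
  have hψ''c : Continuous (deriv (deriv ψ)) := hψ2.continuous_deriv le_rfl
  have hper1 : ∀ x, deriv ψ (x + 2*π) = deriv ψ x := periodic_deriv'' hper
  have hper2 : ∀ x, deriv (deriv ψ) (x + 2*π) = deriv (deriv ψ) x := periodic_deriv'' hper1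
  obtain ⟨B, hB⟩ := bdd_of_periodic hψc hper
  obtain ⟨B', hB'⟩ := bdd_of_periodic hψ'c hper1
  obtain ⟨M₀, hM₀⟩ := bdd_of_periodic hψ''c hper2
  set M : ℝ := ⨆ x : ℝ, |deriv (deriv ψ) x| with hMdef
  have hbdd : BddAbove (Set.range fun x => |deriv (deriv ψ) x|) :=
    ⟨M₀, by rintro _ ⟨x, rfl⟩; exact hM₀ x⟩
  have hM : ∀ x, |deriv (deriv ψ) x| ≤ M := fun x => le_ciSup hbdd x
  have hM0 : 0 ≤ M := le_trans (abs_nonneg _) (hM 0)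
  have hB0 : 0 ≤ B := le_trans (abs_nonneg _) (hB 0)
  have hB'0 : 0 ≤ B' := le_trans (abs_nonneg _) (hB' 0)
  have hαcπ : |αc| ≤ π := abs_le.mpr ⟨hαc.1, hαc.2.le⟩
  -- continuity of kernels
  have hGc : Continuous Gfun :=
    continuous_const.mul (continuous_id.min (continuous_const.sub continuous_id))
  have hGabs : Continuous (fun p : ℝ × ℝ => Gfun |p.1 - p.2|) :=
    hGc.comp ((continuous_fst.sub continuous_snd).abs)
  have hPscrc : Continuous (fun p : ℝ × ℝ => Pscr αd αc a p.1 p.2) := by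
    simp only [Pscr, Pcoll]
    exact (continuous_const.sub continuous_fst).add
      ((continuous_const.mul (hGc.comp ((continuous_fst.sub continuous_snd).abs))).mul
        (continuous_const.add continuous_fst))
  have hgc : Continuous (fun p : ℝ × ℝ => ψ (p.1 + ε * Pscr αd αc a p.1 p.2) - ψ p.1) :=
    (hψc.comp (continuous_fst.add (continuous_const.mul hPscrc))).sub
      (hψc.comp continuous_fst)
  -- strong measurability of parametric integrals
  have smF : StronglyMeasurable
      (fun θ => ∫ φ, (ψ (θ + ε * Pscr αd αc a θ φ) - ψ θ) ∂(f t)) := by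
    exact hgc.stronglyMeasurable.integral_prod_right'
  have smG : StronglyMeasurable (fun θ => ∫ φ, Gfun |θ - φ| ∂(f t)) := by
    exact hGabs.stronglyMeasurable.integral_prod_right'
  have habs2 : ∀ x y : ℝ, |x - y| ≤ |x| + |y| := fun x y => by
    calc |x - y| = |x + -y| := by ring_nf
      _ ≤ |x| + |-y| := abs_add_le _ _
      _ = |x| + |y| := by rw [abs_neg]
  have mkint : ∀ (h : ℝ → ℝ) (C : ℝ), AEStronglyMeasurable h (f t) →
      (∀ᵐ φ ∂(f t), |h φ| ≤ C) → Integrable h (f t) := fun h C hm hb =>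
    ⟨hm, HasFiniteIntegral.of_bounded (by simpa [Real.norm_eq_abs] using hb)⟩
  -- apply the weak equation
  have hw := hweak ψ hψc.measurable ⟨B, hB⟩ hper t ht
  have hDeq : D = (1 / ε) * ∫ θ, ∫ φ, (ψ (θ + ε * Pscr αd αc a θ φ) - ψ θ) ∂(f t) ∂(f t) :=
    hD.unique hw
  -- the per-θ estimate
  have key : ∀ θ ∈ I,
      |(1/ε) * (∫ φ, (ψ (θ + ε * Pscr αd αc a θ φ) - ψ θ) ∂(f t))
        - deriv ψ θ * Hfield αd αc a ρ (f t) θ| ≤ (ε/2 * M * π^2) * ρ := by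
    intro θ hθ
    have hGint : Integrable (fun φ => Gfun |θ - φ|) (f t) :=
      mkint _ 1 ((hGc.comp ((continuous_const.sub continuous_id).abs)).aestronglyMeasurable)
        (haeI.mono fun φ hφ => Gfun_abs_le hθ hφ)
    have hPint : Integrable (fun φ => Pscr αd αc a θ φ) (f t) :=
      mkint _ π ((hPscrc.comp (Continuous.prodMk_right θ)).aestronglyMeasurable)
        (haeI.mono fun φ hφ => pscr_abs_le hαcπ ha.1 ha.2 hθ hφ)
    have hgint : Integrable (fun φ => ψ (θ + ε * Pscr αd αc a θ φ) - ψ θ) (f t) :=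
      mkint _ (B + B) ((hgc.comp (Continuous.prodMk_right θ)).aestronglyMeasurable)
        (MeasureTheory.ae_of_all _ fun φ =>
          le_trans (habs2 _ _) (add_le_add (hB _) (hB _)))
    have hH : ∫ φ, Pscr αd αc a θ φ ∂(f t) = Hfield αd αc a ρ (f t) θ := by
      have e1 : ∫ φ, Pscr αd αc a θ φ ∂(f t)
          = ∫ φ, ((αd - θ) + (a * (αc - αd + θ)) * Gfun |θ - φ|) ∂(f t) := by
        apply integral_congr_ae
        filter_upwards with φ
        rw [Pscr, Pcoll]; ring
      rw [e1, integral_add (integrable_const _) (hGint.const_mul _),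
        MeasureTheory.integral_const_mul, integral_const, measureReal_def, hmassr, smul_eq_mul, Hfield]
    have e2 : (1/ε) * (∫ φ, (ψ (θ + ε * Pscr αd αc a θ φ) - ψ θ) ∂(f t))
        = ∫ φ, (1/ε) * (ψ (θ + ε * Pscr αd αc a θ φ) - ψ θ) ∂(f t) :=
      (MeasureTheory.integral_const_mul _ _).symm
    have e3 : deriv ψ θ * Hfield αd αc a ρ (f t) θ
        = ∫ φ, Pscr αd αc a θ φ * deriv ψ θ ∂(f t) := by
      rw [MeasureTheory.integral_mul_const, hH, mul_comm]
    rw [e2, e3, ← integral_sub (hgint.const_mul _) (hPint.mul_const _), ← Real.norm_eq_abs]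
    have hb := norm_integral_le_of_norm_le_const (μ := f t) (C := ε/2 * M * π^2)
      (f := fun φ => (1/ε) * (ψ (θ + ε * Pscr αd αc a θ φ) - ψ θ)
        - Pscr αd αc a θ φ * deriv ψ θ) ?_
    · rw [measureReal_def, hmassr] at hb
      exact hb
    · filter_upwards [haeI] with φ hφ
      rw [Real.norm_eq_abs]
      set q := Pscr αd αc a θ φ with hq
      have heq : (1/ε) * (ψ (θ + ε*q) - ψ θ) - q * deriv ψ θ
          = (1/ε) * (ψ (θ + ε*q) - ψ θ - (ε*q) * deriv ψ θ) := by
        field_simp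
      rw [heq, abs_mul, abs_of_pos (one_div_pos.mpr hε)]
      have ht2 := taylor2a hψ hM θ (ε*q)
      have hqπ : |q| ≤ π := pscr_abs_le hαcπ ha.1 ha.2 hθ hφ
      have hq2 : q^2 ≤ π^2 := by
        obtain ⟨l, r⟩ := abs_le.mp hqπ
        exact sq_le_sq' l r
      calc (1/ε) * |ψ (θ + ε*q) - ψ θ - ε*q * deriv ψ θ|
          ≤ (1/ε) * (M * (ε*q)^2/2) := mul_le_mul_of_nonneg_left ht2 (by positivity)
        _ = ε/2 * M * q^2 := by field_simp
        _ ≤ ε/2 * M * π^2 := by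
            have h0 : 0 ≤ ε/2 * M := by positivity
            nlinarith
  -- outer integrability
  have hu_int : Integrable (fun θ => (1/ε) * ∫ φ, (ψ (θ + ε * Pscr αd αc a θ φ) - ψ θ) ∂(f t)) (f t) := by
    refine mkint _ ((1/ε) * ((B+B) * ρ)) ((smF.const_mul _).aestronglyMeasurable)
      (MeasureTheory.ae_of_all _ fun θ => ?_)
    rw [abs_mul, abs_of_pos (one_div_pos.mpr hε)]
    refine mul_le_mul_of_nonneg_left ?_ (by positivity)
    have hb := norm_integral_le_of_norm_le_const (μ := f t) (C := B + B)
      (f := fun φ => ψ (θ + ε * Pscr αd αc a θ φ) - ψ θ)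
      (MeasureTheory.ae_of_all _ fun φ => by
        rw [Real.norm_eq_abs]; exact le_trans (habs2 _ _) (add_le_add (hB _) (hB _)))
    rw [measureReal_def, hmassr, Real.norm_eq_abs] at hb
    exact hb
  have smH : StronglyMeasurable (fun θ => Hfield αd αc a ρ (f t) θ) := by
    simp only [Hfield]
    exact ((continuous_const.mul (continuous_const.sub continuous_id)).stronglyMeasurable).add
      (((continuous_const.mul (continuous_const.add continuous_id)).stronglyMeasurable).mul smG)
  have hv_int : Integrable (fun θ => deriv ψ θ * Hfield αd αc a ρ (f t) θ) (f t) := by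
    refine mkint _ (B' * (ρ*π + 2*π*ρ)) ((hψ'c.stronglyMeasurable.mul smH).aestronglyMeasurable)
      (haeI.mono fun θ hθ => ?_)
    rw [abs_mul]
    refine mul_le_mul (hB' _) ?_ (abs_nonneg _) hB'0
    have hGI : abs (∫ φ, Gfun |θ - φ| ∂(f t)) ≤ ρ := by
      have hb := norm_integral_le_of_norm_le_const (μ := f t) (C := 1)
        (f := fun φ => Gfun |θ - φ|)
        (haeI.mono fun φ hφ => by rw [Real.norm_eq_abs]; exact Gfun_abs_le hθ hφ)
      rw [measureReal_def, hmassr, Real.norm_eq_abs, one_mul] at hb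
      exact hb
    rw [Hfield]
    have h1 : |ρ * (αd - θ)| ≤ ρ * π := by
      rw [abs_mul, abs_of_pos hρ]
      refine mul_le_mul_of_nonneg_left ?_ hρ.le
      obtain ⟨l, r⟩ := hθ; exact abs_le.mpr ⟨by linarith, by linarith⟩
    have h2 : |a * (αc - αd + θ) * ∫ φ, Gfun |θ - φ| ∂(f t)| ≤ 2*π*ρ := by
      rw [abs_mul, abs_mul]
      have haa : |a| ≤ 1 := abs_le.mpr ⟨by linarith [ha.1], ha.2⟩
      have hcc : |αc - αd + θ| ≤ 2*π := by
        obtain ⟨l, r⟩ := hθ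
        obtain ⟨l2, r2⟩ := abs_le.mp hαcπ
        exact abs_le.mpr ⟨by linarith, by linarith⟩
      calc |a| * |αc - αd + θ| * abs (∫ φ, Gfun |θ - φ| ∂(f t))
          ≤ 1 * (2*π) * ρ := by
            refine mul_le_mul (mul_le_mul haa hcc (abs_nonneg _) zero_le_one) hGI
              (abs_nonneg _) (by positivity)
        _ = 2*π*ρ := by ring
    calc |ρ * (αd - θ) + a * (αc - αd + θ) * ∫ φ, Gfun |θ - φ| ∂(f t)|
        ≤ |ρ * (αd - θ)| + |a * (αc - αd + θ) * ∫ φ, Gfun |θ - φ| ∂(f t)| := abs_add_le _ _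
      _ ≤ ρ*π + 2*π*ρ := add_le_add h1 h2
  -- final assembly
  rw [hDeq]
  have efinal : (1/ε) * (∫ θ, ∫ φ, (ψ (θ + ε * Pscr αd αc a θ φ) - ψ θ) ∂(f t) ∂(f t))
      - ∫ θ, deriv ψ θ * Hfield αd αc a ρ (f t) θ ∂(f t)
      = ∫ θ, ((1/ε) * (∫ φ, (ψ (θ + ε * Pscr αd αc a θ φ) - ψ θ) ∂(f t))
          - deriv ψ θ * Hfield αd αc a ρ (f t) θ) ∂(f t) := by
    rw [integral_sub hu_int hv_int]
    congr 1
    exact (MeasureTheory.integral_const_mul _ _).symm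
  rw [efinal, ← Real.norm_eq_abs]
  have hb := norm_integral_le_of_norm_le_const (μ := f t) (C := ε/2 * M * π^2 * ρ)
    (f := fun θ => (1/ε) * (∫ φ, (ψ (θ + ε * Pscr αd αc a θ φ) - ψ θ) ∂(f t))
        - deriv ψ θ * Hfield αd αc a ρ (f t) θ)
    (haeI.mono fun θ hθ => by rw [Real.norm_eq_abs]; exact key θ hθ)
  rw [measureReal_def, hmassr] at hb
  exact hb.trans (le_of_eq (by ring))
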